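/- Let μ = (μ₁,…,μ_s) be a partition with s ≥ 2, and let 2 ≤ i ≤ s with μ_{i-1} > μ_i. Then f(μ↑_i) − f(μ) ≥ f(μ↑_i − 1̂) > 0, where μ↑_i increases the i-th part of μ by 1 and ν − 1̂ subtracts 1 from each part (deleting zeros). -/

import Mathlib

/-- The odd double factorial `(2k-1)!! = 1 * 3 * ... * (2k-1)`, with `odf 0 = 1`. -/
def odf (k : Nat) : Int := ∏ j ∈ Finset.Icc 1 k, (2 * (j : Int) - 1)

/-- Subtract `k` from every part, deleting parts that become zero. -/
def subHat (k : Nat) (l : List Nat) : List Nat :=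
  (l.map (fun x => x - k)).filter (fun x => x ≠ 0)

/-- `l` is a partition: a non-increasing list of positive integers. -/
def IsPartition (l : List Nat) : Prop := l.Chain' (· ≥ ·) ∧ ∀ x ∈ l, 0 < x

/-- Increase the `i`-th part (1-based indexing). -/
def upAt (i : Nat) (l : List Nat) : List Nat := l.set (i - 1) (l.getD (i - 1) 0 + 1)

/-- Decrease the `j`-th part (1-based indexing), deleting it if it becomes zero. -/
def downAt (j : Nat) (l : List Nat) : List Nat :=
  (l.set (j - 1) (l.getD (j - 1) 0 - 1)).filter (fun x => x ≠ 0)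


lemma odf_succ (k : Nat) : odf (k+1) = odf k * (2*(k+1:Int) - 1) := by
  simp [odf, Finset.prod_Icc_succ_top (Nat.le_add_left 1 k)]

lemma odf_pos (k : Nat) : 0 < odf k := by
  induction k with
  | zero => simp [odf]
  | succ n ih =>
    rw [odf_succ]
    have : (0:Int) < 2*(n+1:Int) - 1 := by push_cast; omega
    positivity

lemma odf_mono (k : Nat) : odf k ≤ odf (k+1) := by
  rw [odf_succ]
  have : (1:Int) ≤ 2*(k+1:Int) - 1 := by push_cast; omega
  nlinarith [odf_pos k]

lemma subHat_append (k : Nat) (a b : List Nat) :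
    subHat k (a ++ b) = subHat k a ++ subHat k b := by
  simp [subHat]

lemma subHat_cons (k x : Nat) (t : List Nat) :
    subHat k (x :: t) = if x ≤ k then subHat k t else (x - k) :: subHat k t := by
  by_cases h : x ≤ k
  · simp [subHat, List.filter_cons, Nat.sub_eq_zero_iff_le.2 h, h]
  · simp [subHat, List.filter_cons, show x - k ≠ 0 by omega, h]

lemma subHat_subHat (a b : Nat) (l : List Nat) :
    subHat a (subHat b l) = subHat (a + b) l := by
  induction l with
  | nil => simp [subHat]
  | cons x t ih =>
    rw [subHat_cons, subHat_cons (a+b)]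
    by_cases h : x ≤ b
    · rw [if_pos h, if_pos (by omega), ih]
    · rw [if_neg h, subHat_cons]
      by_cases h2 : x - b ≤ a
      · rw [if_pos h2, if_pos (by omega), ih]
      · rw [if_neg h2, if_neg (by omega), ih, show x - b - a = x - (a+b) by omega]

lemma length_subHat_le (k : Nat) (l : List Nat) : (subHat k l).length ≤ l.length := by
  calc (subHat k l).length ≤ (l.map (fun x => x - k)).length := List.length_filter_le _ _
  _ = l.length := by simp

lemma isPartition_sorted {l : List Nat} (h : IsPartition l) : l.Pairwise (· ≥ ·) :=
  List.isChain_iff_pairwise.1 h.1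

lemma isPartition_dropLast {l : List Nat} (h : IsPartition l) : IsPartition l.dropLast :=
  ⟨h.1.prefix (List.dropLast_prefix l), fun x hx => h.2 x (List.dropLast_subset l hx)⟩

lemma isPartition_subHat {l : List Nat} (h : IsPartition l) (k : Nat) :
    IsPartition (subHat k l) := by
  constructor
  · refine List.isChain_iff_pairwise.2 ?_
    apply List.Pairwise.filter
    exact (isPartition_sorted h).map _ (fun a b hab => Nat.sub_le_sub_right hab k)
  · intro x hx
    simp only [subHat, List.mem_filter, decide_eq_true_eq] at hx
    omega

lemma odf_one : odf 1 = 1 := by simp [odf]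

lemma getLastD_eq (l : List Nat) (h : l ≠ []) : l.getLastD 0 = l.getLast h := by
  cases l with
  | nil => simp at h
  | cons a t => rw [List.getLast_eq_getLastD]; cases t <;> simp [List.getLastD]

lemma getLastD_mem (l : List Nat) (h : l ≠ []) : l.getLastD 0 ∈ l := by
  rw [getLastD_eq l h]; exact List.getLast_mem h

lemma d_facts (d : Nat → Int) (hd0 : d 0 = 1) (hd1 : d 1 = 0)
    (hd : ∀ n : Nat, 2 ≤ n → d n = 2 * ((n : Int) - 1) * (d (n - 1) + d (n - 2))) :
    ∀ n, 0 ≤ d n ∧ (n ≠ 1 → 0 < d n) := by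
  intro n
  induction n using Nat.strong_induction_on with
  | _ n ih =>
    match n with
    | 0 => simp [hd0]
    | 1 => simp [hd1]
    | (k+2) =>
      have h1 := ih (k+1) (by omega)
      have h2 := ih k (by omega)
      have e : d (k+2) = 2 * ((k+2 : Int) - 1) * (d (k+1) + d k) := by
        have := hd (k+2) (by omega)
        norm_num at this ⊢
        convert this using 3 <;> push_cast <;> ring
      have hpos : 0 < d (k+1) + d k := by
        rcases Nat.eq_zero_or_pos k with rfl | hk
        · have := h2.2 (by omega); omega
        · have := h1.2 (by omega); omega
      have : (0:Int) < 2 * ((k+2 : Int) - 1) := by push_cast; omega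
      have : (0:Int) < d (k+2) := by rw [e]; positivity
      exact ⟨le_of_lt this, fun _ => this⟩

lemma f_facts (d : Nat → Int) (hd0 : d 0 = 1) (hd1 : d 1 = 0)
    (hd : ∀ n : Nat, 2 ≤ n → d n = 2 * ((n : Int) - 1) * (d (n - 1) + d (n - 2)))
    (f : List Nat → Int) (hf0 : f [] = 1) (hf1 : ∀ m : Nat, f [m] = d m)
    (hfr : ∀ l : List Nat, IsPartition l → 2 ≤ l.length →
      f l = f l.dropLast + ∑ k ∈ Finset.Icc 1 (l.getLastD 0),
        ((l.getLastD 0).choose k : Int) * odf k * f (subHat k l.dropLast)) :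
    ∀ n (l : List Nat), l.length ≤ n → IsPartition l → 0 ≤ f l ∧ (l ≠ [1] → 0 < f l) := by
  intro n
  induction n with
  | zero =>
    intro l hl _
    have : l = [] := List.length_eq_zero_iff.1 (by omega)
    subst this
    simp [hf0]
  | succ n ih =>
    intro l hl hpart
    match l with
    | [] => simp [hf0]
    | [m] =>
      have hm : 0 < m := hpart.2 m (by simp)
      have := d_facts d hd0 hd1 hd m
      constructor
      · rw [hf1]; exact this.1
      · intro hne
        rw [hf1]
        exact this.2 (by simpa using hne)
    | (a :: b :: t) =>
      set l := a :: b :: t with hldef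
      have hlen2 : 2 ≤ l.length := by simp [hldef]
      have hnil : l ≠ [] := by simp [hldef]
      set m := l.getLastD 0 with hm
      have hm1 : 1 ≤ m := hpart.2 _ (getLastD_mem l hnil)
      have hν : IsPartition l.dropLast := isPartition_dropLast hpart
      have hlenν : l.dropLast.length ≤ n := by
        rw [List.length_dropLast]; omega
      have hterm : ∀ k ∈ Finset.Icc 1 m,
          0 ≤ (m.choose k : Int) * odf k * f (subHat k l.dropLast) := by
        intro k _
        have hsub : (subHat k l.dropLast).length ≤ n :=
          le_trans (length_subHat_le _ _) hlenν
        have := (ih _ hsub (isPartition_subHat hν k)).1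
        have := (odf_pos k).le
        positivity
      have hsum : 0 ≤ ∑ k ∈ Finset.Icc 1 m,
          (m.choose k : Int) * odf k * f (subHat k l.dropLast) :=
        Finset.sum_nonneg hterm
      have hrec := hfr l hpart hlen2
      have hν0 := (ih _ hlenν hν).1
      constructor
      · rw [hrec]; positivity
      · intro _
        rw [hrec]
        have h1mem : 1 ∈ Finset.Icc 1 m := by simp [hm1]
        have hsingle : (m.choose 1 : Int) * odf 1 * f (subHat 1 l.dropLast)
            ≤ ∑ k ∈ Finset.Icc 1 m, (m.choose k : Int) * odf k * f (subHat k l.dropLast) :=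
          Finset.single_le_sum hterm h1mem
        by_cases hcase : l.dropLast = [1]
        · have : subHat 1 l.dropLast = [] := by simp [hcase, subHat]
          rw [Nat.choose_one_right] at hsingle
          rw [this, hf0, odf_one] at hsingle
          have : (1:Int) ≤ m := by exact_mod_cast hm1
          nlinarith
        · have := (ih _ hlenν hν).2 hcase
          linarith

lemma sum_Icc_one (M : Nat) (g : Nat → Int) :
    ∑ k ∈ Finset.Icc 1 M, g k = ∑ i ∈ Finset.range M, g (i+1) := by
  rw [← Finset.Ico_add_one_right_eq_Icc, Finset.sum_Ico_eq_sum_range]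
  refine Finset.sum_congr (by norm_num) (fun i _ => by rw [Nat.add_comm])

lemma part_anti {l : List Nat} (h : IsPartition l) {i j : Nat} (hij : i ≤ j)
    (hj : j < l.length) : l[j] ≤ l[i]'(lt_of_le_of_lt hij hj) := by
  rcases eq_or_lt_of_le hij with rfl | hlt
  · exact le_refl _
  · exact (List.pairwise_iff_getElem.1 (isPartition_sorted h)) i j _ hj hlt

lemma part_pos {l : List Nat} (h : IsPartition l) {j : Nat} (hj : j < l.length) :
    1 ≤ l[j] := h.2 _ (l.getElem_mem hj)

lemma length_upAt (i : Nat) (l : List Nat) : (upAt i l).length = l.length := by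
  simp [upAt]

lemma getElem_upAt_self (i : Nat) (l : List Nat) (hi1 : 1 ≤ i) (hil : i ≤ l.length) :
    (upAt i l)[i-1]'(by rw [length_upAt]; omega) = l[i-1]'(by omega) + 1 := by
  unfold upAt
  rw [List.getElem_set_self, List.getD_eq_getElem l 0 (by omega)]

lemma getElem_upAt_ne (i : Nat) (l : List Nat) (j : Nat) (hj : j < l.length) (hne : j ≠ i - 1) :
    (upAt i l)[j]'(by rw [length_upAt]; omega) = l[j] := by
  unfold upAt
  rw [List.getElem_set_ne (by omega)]

lemma mem_upAt {x : Nat} {i : Nat} {l : List Nat} (hx : x ∈ upAt i l)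
    (hi1 : 1 ≤ i) (hil : i ≤ l.length) :
    x ∈ l ∨ x = l[i-1]'(by omega) + 1 := by
  rw [List.mem_iff_getElem] at hx
  obtain ⟨j, hj, hjx⟩ := hx
  rw [length_upAt] at hj
  by_cases hje : j = i - 1
  · subst hje
    right
    rw [getElem_upAt_self i l hi1 hil] at hjx
    omega
  · left
    rw [getElem_upAt_ne i l j hj hje] at hjx
    exact hjx ▸ l.getElem_mem hj

lemma isPartition_upAt {l : List Nat} (h : IsPartition l) {i : Nat} (hi2 : 2 ≤ i)
    (hil : i ≤ l.length) (hlt : l[i-1]'(by omega) < l[i-2]'(by omega)) :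
    IsPartition (upAt i l) := by
  constructor
  · refine List.isChain_iff_pairwise.2 ?_
    rw [List.pairwise_iff_getElem]
    intro a b ha hb hab
    rw [length_upAt] at ha hb
    by_cases hae : a = i - 1
    · subst hae
      rw [getElem_upAt_self i l (by omega) hil,
          getElem_upAt_ne i l b hb (by omega)]
      have := part_anti h (show i - 1 ≤ b by omega) hb
      omega
    · rw [getElem_upAt_ne i l a ha hae]
      by_cases hbe : b = i - 1
      · subst hbe
        rw [getElem_upAt_self i l (by omega) hil]
        have : a ≤ i - 2 := by omega
        have := part_anti h this (show i - 2 < l.length by omega)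
        have := part_anti h (le_refl (i-2)) (show i - 2 < l.length by omega)
        omega
      · rw [getElem_upAt_ne i l b hb hbe]
        exact part_anti h (le_of_lt hab) hb
  · intro x hx
    rcases mem_upAt hx (by omega) hil with hmem | rfl
    · exact h.2 x hmem
    · omega

lemma eq_concat (l : List Nat) (h : l ≠ []) : l = l.dropLast ++ [l.getLastD 0] := by
  rw [getLastD_eq l h]
  exact (List.dropLast_concat_getLast h).symm

lemma upAt_concat_lt (i : Nat) (a b : List Nat) (hi1 : 1 ≤ i) (hia : i ≤ a.length) :
    upAt i (a ++ b) = upAt i a ++ b := by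
  unfold upAt
  rw [List.set_append, if_pos (by omega)]
  congr 2
  rw [List.getD_eq_getElem _ 0 (by simp; omega), List.getD_eq_getElem a 0 (by omega),
      List.getElem_append_left]

lemma upAt_concat_last (a : List Nat) (x : Nat) :
    upAt (a.length + 1) (a ++ [x]) = a ++ [x+1] := by
  unfold upAt
  have h1 : a.length + 1 - 1 = a.length := by omega
  rw [h1, List.set_append, if_neg (by omega), List.getD_eq_getElem _ 0 (by simp)]
  simp

lemma subHat_eq_map (k : Nat) (l : List Nat) (h : ∀ x ∈ l, k < x) :
    subHat k l = l.map (· - k) := by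
  unfold subHat
  apply List.filter_eq_self.2
  intro x hx
  rw [List.mem_map] at hx
  obtain ⟨y, hy, rfl⟩ := hx
  have := h y hy
  simpa using by omega

lemma map_sub_upAt (k i : Nat) (l : List Nat) (hi1 : 1 ≤ i) (hil : i ≤ l.length)
    (hk : k ≤ l[i-1]'(by omega)) :
    (upAt i l).map (· - k) = upAt i (l.map (· - k)) := by
  unfold upAt
  rw [List.map_set, List.getD_eq_getElem l 0 (by omega),
      List.getD_eq_getElem (l.map (· - k)) 0 (by simp; omega), List.getElem_map]
  congr 1
  omega

lemma subHat_decomp (k i : Nat) (l : List Nat) (hi : i ≤ l.length)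
    (h : ∀ x ∈ l.take i, k < x) :
    subHat k l = (l.take i).map (· - k) ++ subHat k (l.drop i) := by
  conv_lhs => rw [← List.take_append_drop i l]
  rw [subHat_append, subHat_eq_map _ _ h]

lemma subHat_upAt_comm (k i : Nat) (l : List Nat) (hi1 : 1 ≤ i) (hil : i ≤ l.length)
    (h : ∀ x ∈ l.take i, k < x) :
    subHat k (upAt i l) = upAt i (subHat k l) := by
  have hlen : (l.take i).length = i := by simp [hil]
  have htk : l[i-1]'(by omega) ∈ l.take i := by
    rw [List.mem_iff_getElem]
    exact ⟨i-1, by omega, by rw [List.getElem_take]⟩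
  have hup : upAt i l = upAt i (l.take i) ++ l.drop i := by
    conv_lhs => rw [← List.take_append_drop i l]
    exact upAt_concat_lt i _ _ hi1 (by omega)
  have hmemup : ∀ x ∈ upAt i (l.take i), k < x := by
    intro x hx
    rcases mem_upAt hx hi1 (by omega) with hmem | rfl
    · exact h x hmem
    · have := h _ htk
      have : (l.take i)[i-1]'(by omega) = l[i-1]'(by omega) := by rw [List.getElem_take]
      omega
  rw [hup, subHat_append, subHat_eq_map _ _ hmemup,
      map_sub_upAt k i _ hi1 (by omega)
        (by rw [List.getElem_take]; exact le_of_lt (h _ htk)),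
      subHat_decomp k i l hil h]
  rw [← upAt_concat_lt i _ _ hi1 (by simp; omega)]

lemma subHat_nil (k : Nat) : subHat k [] = [] := by simp [subHat]

lemma subHat_eq_nil (k : Nat) (l : List Nat) (h : ∀ x ∈ l, x ≤ k) : subHat k l = [] := by
  induction l with
  | nil => simp [subHat]
  | cons x t ih =>
    rw [subHat_cons, if_pos (h x (by simp))]
    exact ih (fun y hy => h y (by simp [hy]))

lemma mem_take_elts {l : List Nat} {i x : Nat} (hx : x ∈ l.take i) :
    ∃ j, j < i ∧ ∃ (hj : j < l.length), x = l[j] := by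
  rw [List.mem_iff_getElem] at hx
  obtain ⟨j, hj, hjx⟩ := hx
  rw [List.length_take] at hj
  exact ⟨j, by omega, by omega, by rw [← hjx, List.getElem_take]⟩

lemma isPartition_take {l : List Nat} (h : IsPartition l) (i : Nat) :
    IsPartition (l.take i) :=
  ⟨h.1.prefix (List.take_prefix i l), fun x hx => h.2 x (List.take_subset i l hx)⟩

set_option maxHeartbeats 1000000 in
lemma _dummy : True := trivial

section Main

variable (d : Nat → Int) (hd0 : d 0 = 1) (hd1 : d 1 = 0)
  (hd : ∀ n : Nat, 2 ≤ n → d n = 2 * ((n : Int) - 1) * (d (n - 1) + d (n - 2)))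
  (f : List Nat → Int) (hf0 : f [] = 1) (hf1 : ∀ m : Nat, f [m] = d m)
  (hfr : ∀ l : List Nat, IsPartition l → 2 ≤ l.length →
      f l = f l.dropLast + ∑ k ∈ Finset.Icc 1 (l.getLastD 0),
        ((l.getLastD 0).choose k : Int) * odf k * f (subHat k l.dropLast))

include hd0 hd1 hd hf0 hf1 hfr

lemma fnn : ∀ l, IsPartition l → 0 ≤ f l :=
  fun l hl => (f_facts d hd0 hd1 hd f hf0 hf1 hfr l.length l le_rfl hl).1

lemma fpos : ∀ l, IsPartition l → l ≠ [1] → 0 < f l :=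
  fun l hl => (f_facts d hd0 hd1 hd f hf0 hf1 hfr l.length l le_rfl hl).2

lemma pos_part (μ : List Nat) (hμ : IsPartition μ) (i : Nat) (hi2 : 2 ≤ i)
    (his : i ≤ μ.length) (hltD : μ.getD (i-1) 0 < μ.getD (i-2) 0) :
    0 < f (subHat 1 (upAt i μ)) := by
  have hi1r : i - 1 < μ.length := by omega
  have hi2r : i - 2 < μ.length := by omega
  have hlt : μ[i-1]'hi1r < μ[i-2]'hi2r := by
    rwa [List.getD_eq_getElem μ 0 hi1r, List.getD_eq_getElem μ 0 hi2r] at hltD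
  have hA : IsPartition (upAt i μ) := isPartition_upAt hμ hi2 his hlt
  have htake : ∀ x ∈ (upAt i μ).take i, 1 < x := by
    intro x hx
    obtain ⟨j, hji, hjlen, rfl⟩ := mem_take_elts hx
    have hjμ : j < μ.length := by rwa [length_upAt] at hjlen
    have hp := part_pos hμ hi1r
    by_cases hje : j = i - 1
    · subst hje
      rw [getElem_upAt_self i μ (by omega) his]
      omega
    · rw [getElem_upAt_ne i μ j hjμ hje]
      have h1 : j ≤ i - 2 := by omega
      have := part_anti hμ h1 hi2r
      omega
  have hdecB := subHat_decomp 1 i (upAt i μ) (by rw [length_upAt]; omega) htake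
  have hBpart : IsPartition (subHat 1 (upAt i μ)) := isPartition_subHat hA 1
  have hBlen : 2 ≤ (subHat 1 (upAt i μ)).length := by
    rw [hdecB, List.length_append, List.length_map, List.length_take, length_upAt]
    omega
  exact fpos d hd0 hd1 hd f hf0 hf1 hfr _ hBpart
    (by intro hcon; rw [hcon] at hBlen; simp at hBlen)

lemma case_last (μ : List Nat) (hμ : IsPartition μ) (hs : 2 ≤ μ.length)
    (i : Nat) (hi2 : 2 ≤ i) (hieq : i = μ.length)
    (hltD : μ.getD (i-1) 0 < μ.getD (i-2) 0) :
    f (subHat 1 (upAt i μ)) ≤ f (upAt i μ) - f μ := by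
  have his : i ≤ μ.length := by omega
  have hi1r : i - 1 < μ.length := by omega
  have hi2r : i - 2 < μ.length := by omega
  have hlt : μ[i-1]'hi1r < μ[i-2]'hi2r := by
    rwa [List.getD_eq_getElem μ 0 hi1r, List.getD_eq_getElem μ 0 hi2r] at hltD
  have hA : IsPartition (upAt i μ) := isPartition_upAt hμ hi2 his hlt
  have hμne : μ ≠ [] := by intro h; rw [h] at hs; simp at hs
  set m := μ.getLastD 0 with hmdef
  have hmval : m = μ[μ.length - 1]'(by omega) := by
    rw [hmdef, getLastD_eq μ hμne, List.getLast_eq_getElem]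
  have hm1 : 1 ≤ m := by rw [hmval]; exact part_pos hμ (by omega)
  have hνpart : IsPartition μ.dropLast := isPartition_dropLast hμ
  have hνlen : μ.dropLast.length = μ.length - 1 := List.length_dropLast
  have hμeq : μ = μ.dropLast ++ [m] := eq_concat μ hμne
  -- elements of dropLast exceed 1
  have hνelts : ∀ x ∈ μ.dropLast, 1 < x := by
    intro x hx
    rw [List.mem_iff_getElem] at hx
    obtain ⟨j, hj, rfl⟩ := hx
    rw [List.getElem_dropLast]
    have hj2 : j ≤ i - 2 := by omega
    have := part_anti hμ hj2 hi2r
    have := part_pos hμ hi1r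
    omega
  -- upAt i μ = dropLast ++ [m+1]
  have hup : upAt i μ = μ.dropLast ++ [m+1] := by
    have h1 : i = μ.dropLast.length + 1 := by omega
    calc upAt i μ = upAt (μ.dropLast.length + 1) (μ.dropLast ++ [m]) := by
          rw [← h1, ← hμeq]
      _ = μ.dropLast ++ [m+1] := upAt_concat_last _ _
  have hA2 : IsPartition (μ.dropLast ++ [m+1]) := hup ▸ hA
  -- expansion of f (upAt i μ)
  have hfrA := hfr (μ.dropLast ++ [m+1]) hA2
    (by rw [List.length_append, hνlen, List.length_singleton]; omega)
  rw [List.dropLast_concat, List.getLastD_concat, sum_Icc_one] at hfrA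
  -- expansion of f μ
  have hfrμ := hfr μ hμ hs
  rw [← hmdef, sum_Icc_one] at hfrμ
  -- expansion of f (subHat 1 (upAt i μ))
  have hsub1 : subHat 1 (upAt i μ) = subHat 1 μ.dropLast ++ [m] := by
    rw [hup, subHat_append, subHat_cons, if_neg (by omega), subHat_nil,
      Nat.add_sub_cancel]
  have hs1map : subHat 1 μ.dropLast = μ.dropLast.map (· - 1) :=
    subHat_eq_map 1 _ hνelts
  have hBpart : IsPartition (subHat 1 μ.dropLast ++ [m]) :=
    hsub1 ▸ isPartition_subHat hA 1
  have hfrB := hfr (subHat 1 μ.dropLast ++ [m]) hBpart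
    (by rw [List.length_append, hs1map, List.length_map, hνlen, List.length_singleton]; omega)
  rw [List.dropLast_concat, List.getLastD_concat, sum_Icc_one] at hfrB
  simp only [subHat_subHat] at hfrB
  rw [hsub1, hfrB, hup, hfrA, hfrμ, Finset.sum_range_succ]
  -- now pure arithmetic over sums
  have hcomb : ∑ j ∈ Finset.range m,
        (((m+1).choose (j+1) : Int) * odf (j+1) * f (subHat (j+1) μ.dropLast))
      - ∑ j ∈ Finset.range m,
        ((m.choose (j+1) : Int) * odf (j+1) * f (subHat (j+1) μ.dropLast))
      = ∑ j ∈ Finset.range m,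
        ((m.choose j : Int) * odf (j+1) * f (subHat (j+1) μ.dropLast)) := by
    rw [← Finset.sum_sub_distrib]
    refine Finset.sum_congr rfl (fun j _ => ?_)
    have h := Nat.choose_succ_succ m j
    push_cast [h]
    ring
  have hshift : ∑ j ∈ Finset.range m,
        ((m.choose j : Int) * odf (j+1) * f (subHat (j+1) μ.dropLast))
      + ((m+1).choose (m+1) : Int) * odf (m+1) * f (subHat (m+1) μ.dropLast)
      = f (subHat 1 μ.dropLast)
        + ∑ j ∈ Finset.range m,
          ((m.choose (j+1) : Int) * odf (j+1+1) * f (subHat (j+1+1) μ.dropLast)) := by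
    have h0 := Finset.sum_range_succ
      (fun j => (m.choose j : Int) * odf (j+1) * f (subHat (j+1) μ.dropLast)) m
    have h1 := Finset.sum_range_succ'
      (fun j => (m.choose j : Int) * odf (j+1) * f (subHat (j+1) μ.dropLast)) m
    simp only [Nat.choose_self, Nat.cast_one, one_mul, Nat.choose_zero_right,
      Nat.zero_add, odf_one] at h0 h1 ⊢
    rw [← h0, h1]
    ring
  have hterm : ∀ j ∈ Finset.range m,
      (m.choose (j+1) : Int) * odf (j+1) * f (subHat (j+1+1) μ.dropLast)
      ≤ (m.choose (j+1) : Int) * odf (j+1+1) * f (subHat (j+1+1) μ.dropLast) := by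
    intro j _
    have h1 := odf_mono (j+1)
    have h2 := fnn d hd0 hd1 hd f hf0 hf1 hfr _ (isPartition_subHat hνpart (j+1+1))
    have h3 : (0:Int) ≤ (m.choose (j+1) : Int) := by positivity
    exact mul_le_mul_of_nonneg_right (mul_le_mul_of_nonneg_left h1 h3) h2
  have hsum := Finset.sum_le_sum hterm
  linarith [hsum, hcomb, hshift]

set_option maxHeartbeats 1000000 in
lemma case_lt (n : Nat)
    (ihn : ∀ μ : List Nat, μ.length ≤ n → IsPartition μ → 2 ≤ μ.length →
      ∀ i, 2 ≤ i → i ≤ μ.length → μ.getD (i-1) 0 < μ.getD (i-2) 0 →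
      f (subHat 1 (upAt i μ)) ≤ f (upAt i μ) - f μ ∧ 0 < f (subHat 1 (upAt i μ)))
    (μ : List Nat) (hlen : μ.length ≤ n + 1) (hμ : IsPartition μ)
    (i : Nat) (hi2 : 2 ≤ i) (hilt : i < μ.length)
    (hltD : μ.getD (i-1) 0 < μ.getD (i-2) 0) :
    f (subHat 1 (upAt i μ)) ≤ f (upAt i μ) - f μ := by
  have hs : 2 ≤ μ.length := by omega
  have his : i ≤ μ.length := by omega
  have hi1r : i - 1 < μ.length := by omega
  have hi2r : i - 2 < μ.length := by omega
  have hlt : μ[i-1]'hi1r < μ[i-2]'hi2r := by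
    rwa [List.getD_eq_getElem μ 0 hi1r, List.getD_eq_getElem μ 0 hi2r] at hltD
  have hA : IsPartition (upAt i μ) := isPartition_upAt hμ hi2 his hlt
  have hμne : μ ≠ [] := by intro h; rw [h] at hs; simp at hs
  set m := μ.getLastD 0 with hmdef
  have hmval : m = μ[μ.length - 1]'(by omega) := by
    rw [hmdef, getLastD_eq μ hμne, List.getLast_eq_getElem]
  have hm1 : 1 ≤ m := by rw [hmval]; exact part_pos hμ (by omega)
  have hmp : m ≤ μ[i-1]'hi1r := by rw [hmval]; exact part_anti hμ (by omega) (by omega)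
  have hνpart : IsPartition μ.dropLast := isPartition_dropLast hμ
  have hνlen : μ.dropLast.length = μ.length - 1 := List.length_dropLast
  have hμeq : μ = μ.dropLast ++ [m] := eq_concat μ hμne
  have hνget : ∀ j (hj : j < μ.length - 1),
      μ.dropLast[j]'(by rw [hνlen]; omega) = μ[j]'(by omega) := by
    intro j hj
    exact List.getElem_dropLast _
  -- all elements of dropLast are ≥ m
  have hνge : ∀ x ∈ μ.dropLast, m ≤ x := by
    intro x hx
    rw [List.mem_iff_getElem] at hx
    obtain ⟨j, hj, rfl⟩ := hx
    rw [hνget j (by omega)]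
    rw [hmval]
    exact part_anti hμ (by omega) (by omega)
  -- IH applied to dropLast
  have e1 : μ.dropLast.getD (i-1) 0 = μ[i-1]'hi1r := by
    rw [List.getD_eq_getElem _ 0 (by omega)]
    exact hνget (i-1) (by omega)
  have e2 : μ.dropLast.getD (i-2) 0 = μ[i-2]'hi2r := by
    rw [List.getD_eq_getElem _ 0 (by omega)]
    exact hνget (i-2) (by omega)
  have ihν := ihn μ.dropLast (by omega) hνpart (by omega) i hi2 (by omega)
    (by rw [e1, e2]; exact hlt)
  -- decomposition of upAt i μ
  have hup : upAt i μ = upAt i μ.dropLast ++ [m] := by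
    conv_lhs => rw [hμeq]
    exact upAt_concat_lt i _ _ (by omega) (by omega)
  have hν'part : IsPartition (upAt i μ.dropLast) := by
    refine isPartition_upAt hνpart hi2 (by omega) ?_
    rw [hνget (i-1) (by omega), hνget (i-2) (by omega)]
    exact hlt
  -- expansions
  have hA2 : IsPartition (upAt i μ.dropLast ++ [m]) := hup ▸ hA
  have hfrA := hfr (upAt i μ.dropLast ++ [m]) hA2
    (by rw [List.length_append, length_upAt, hνlen, List.length_singleton]; omega)
  rw [List.dropLast_concat, List.getLastD_concat, sum_Icc_one] at hfrA
  have hfrμ := hfr μ hμ hs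
  rw [← hmdef, sum_Icc_one] at hfrμ
  -- bracket inequality for k < μ[i-1]
  have hbr : ∀ k, 1 ≤ k → k < μ[i-1]'hi1r →
      f (subHat (k+1) (upAt i μ.dropLast)) ≤
        f (subHat k (upAt i μ.dropLast)) - f (subHat k μ.dropLast) := by
    intro k hk1 hkp
    have htakeν : ∀ x ∈ μ.dropLast.take i, k < x := by
      intro x hx
      obtain ⟨j, hji, hjlen, rfl⟩ := mem_take_elts hx
      rw [hνget j (by rw [hνlen] at hjlen; omega)]
      have : j ≤ i - 1 := by omega
      have := part_anti hμ this hi1r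
      omega
    have hcomm := subHat_upAt_comm k i μ.dropLast (by omega) (by omega) htakeν
    have hdec := subHat_decomp k i μ.dropLast (by omega) htakeν
    have hlenk : i ≤ (subHat k μ.dropLast).length := by
      rw [hdec, List.length_append, List.length_map, List.length_take]
      omega
    have hlenk2 : (subHat k μ.dropLast).length ≤ n := by
      have := length_subHat_le k μ.dropLast
      omega
    have hget : ∀ j (hj : j < i), (subHat k μ.dropLast).getD j 0 = μ[j]'(Nat.lt_of_lt_of_le hj his) - k := by
      intro j hj
      have hjlen : j < ((μ.dropLast.take i).map (· - k)).length := by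
        rw [List.length_map, List.length_take]; omega
      rw [hdec, List.getD_eq_getElem _ 0 (by rw [List.length_append]; omega),
        List.getElem_append_left hjlen, List.getElem_map, List.getElem_take,
        hνget j (by omega)]
    have ihk := ihn (subHat k μ.dropLast) hlenk2 (isPartition_subHat hνpart k)
      (by omega) i hi2 hlenk
      (by rw [hget (i-1) (by omega), hget (i-2) (by omega)]
          have h1 : k < μ[i-2]'hi2r := by omega
          omega)
    rw [← hcomm, subHat_subHat, Nat.add_comm 1 k] at ihk
    exact ihk.1
  -- bracket at k = m is nonnegative
  have hbr0 : 0 ≤ f (subHat m (upAt i μ.dropLast)) - f (subHat m μ.dropLast) := by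
    by_cases hpm : m < μ[i-1]'hi1r
    · have h1 := hbr m hm1 hpm
      have h2 := fnn d hd0 hd1 hd f hf0 hf1 hfr _
        (isPartition_subHat hν'part (m+1))
      linarith
    · have hpm' : μ[i-1]'hi1r = m := by omega
      -- all elements of the drop at i-1 equal m
      have hdropall : ∀ x ∈ μ.dropLast.drop (i-1), x = m := by
        intro x hx
        rw [List.mem_iff_getElem] at hx
        obtain ⟨j, hj, rfl⟩ := hx
        rw [List.length_drop] at hj
        rw [List.getElem_drop]
        rw [hνget (i-1+j) (by omega)]
        have hub : μ[i-1+j]'(by omega) ≤ μ[i-1]'hi1r := part_anti hμ (by omega) (by omega)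
        have hlb : μ[μ.length-1]'(by omega) ≤ μ[i-1+j]'(by omega) :=
          part_anti hμ (by omega) (by omega)
        omega
      have hdropall' : ∀ x ∈ μ.dropLast.drop i, x = m := by
        intro x hx
        rw [List.mem_iff_getElem] at hx
        obtain ⟨j, hj, rfl⟩ := hx
        rw [List.length_drop] at hj
        rw [List.getElem_drop]
        rw [hνget (i+j) (by omega)]
        have hub : μ[i+j]'(by omega) ≤ μ[i-1]'hi1r := part_anti hμ (by omega) (by omega)
        have hlb : μ[μ.length-1]'(by omega) ≤ μ[i+j]'(by omega) :=
          part_anti hμ (by omega) (by omega)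
        omega
      have htka : ∀ x ∈ μ.dropLast.take (i-1), m < x := by
        intro x hx
        obtain ⟨j, hji, hjlen, rfl⟩ := mem_take_elts hx
        rw [hνget j (by rw [hνlen] at hjlen; omega)]
        have h1 : j ≤ i - 2 := by omega
        have := part_anti hμ h1 hi2r
        omega
      -- subHat m dropLast = map over the take
      have hsmν : subHat m μ.dropLast = (μ.dropLast.take (i-1)).map (· - m) := by
        rw [subHat_decomp m (i-1) μ.dropLast (by omega) htka,
          subHat_eq_nil m _ (fun x hx => le_of_eq (hdropall x hx)), List.append_nil]
      -- decompose upAt i dropLast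
      have hlentake : (μ.dropLast.take (i-1)).length = i - 1 := by
        rw [List.length_take]; omega
      have hgd : μ.dropLast.getD (i-1) 0 = m := by
        rw [List.getD_eq_getElem _ 0 (by omega), hνget (i-1) (by omega), hpm']
      have hdropcons : μ.dropLast.drop (i-1) = m :: μ.dropLast.drop i := by
        rw [List.drop_eq_getElem_cons (by omega)]
        congr 1
        · rw [hνget (i-1) (by omega), hpm']
        · congr 1
          omega
      have hup2 : upAt i μ.dropLast =
          μ.dropLast.take (i-1) ++ (m+1) :: μ.dropLast.drop i := by
        unfold upAt
        rw [hgd]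
        conv_lhs => rw [← List.take_append_drop (i-1) μ.dropLast, hdropcons]
        rw [List.set_append, if_neg (by rw [hlentake]; omega), hlentake,
          Nat.sub_self, List.set_cons_zero]
      -- compute subHat m (upAt i dropLast)
      have hsmν' : subHat m (upAt i μ.dropLast) =
          (μ.dropLast.take (i-1)).map (· - m) ++ [1] := by
        rw [hup2, subHat_append, subHat_eq_map m _ htka, subHat_cons,
          if_neg (by omega), subHat_eq_nil m _ (fun x hx => le_of_eq (hdropall' x hx))]
        congr 2
        omega
      -- f (λ ++ [1]) ≥ f λ
      have hLpart : IsPartition ((μ.dropLast.take (i-1)).map (· - m)) :=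
        hsmν ▸ isPartition_subHat hνpart m
      have hL1part : IsPartition ((μ.dropLast.take (i-1)).map (· - m) ++ [1]) :=
        hsmν' ▸ isPartition_subHat hν'part m
      have hfrL := hfr _ hL1part
        (by rw [List.length_append, List.length_map, hlentake, List.length_singleton]; omega)
      rw [List.dropLast_concat, List.getLastD_concat] at hfrL
      have hsum1 : ∑ k ∈ Finset.Icc 1 1,
          ((Nat.choose 1 k : Int) * odf k * f (subHat k ((μ.dropLast.take (i-1)).map (· - m))))
          = f (subHat 1 ((μ.dropLast.take (i-1)).map (· - m))) := by
        rw [Finset.Icc_self, Finset.sum_singleton, Nat.choose_self, odf_one]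
        push_cast
        ring
      rw [hsum1] at hfrL
      have hnn := fnn d hd0 hd1 hd f hf0 hf1 hfr _ (isPartition_subHat hLpart 1)
      rw [hsmν, hsmν', hfrL]
      linarith
  -- main case split on m
  by_cases hm2 : 2 ≤ m
  · -- elements of upAt i dropLast exceed 1
    have hupelts : ∀ x ∈ upAt i μ.dropLast, 1 < x := by
      intro x hx
      rcases mem_upAt hx (by omega) (by omega) with hmem | rfl
      · have := hνge x hmem; omega
      · exact Nat.succ_lt_succ (part_pos hνpart (by rw [hνlen]; omega))
    have hsub1ν' : subHat 1 (upAt i μ.dropLast) = (upAt i μ.dropLast).map (· - 1) :=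
      subHat_eq_map 1 _ hupelts
    have hsubB : subHat 1 (upAt i μ) = subHat 1 (upAt i μ.dropLast) ++ [m-1] := by
      rw [hup, subHat_append, subHat_cons, if_neg (by omega), subHat_nil]
    have hBpart : IsPartition (subHat 1 (upAt i μ.dropLast) ++ [m-1]) :=
      hsubB ▸ isPartition_subHat hA 1
    have hfrB := hfr (subHat 1 (upAt i μ.dropLast) ++ [m-1]) hBpart
      (by rw [List.length_append, hsub1ν', List.length_map, length_upAt, hνlen,
            List.length_singleton]; omega)
    rw [List.dropLast_concat, List.getLastD_concat, sum_Icc_one] at hfrB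
    simp only [subHat_subHat] at hfrB
    rw [hsubB, hfrB, hup, hfrA, hfrμ]
    -- sum manipulations
    have hdiff : ∑ j ∈ Finset.range m,
          ((m.choose (j+1) : Int) * odf (j+1) * f (subHat (j+1) (upAt i μ.dropLast)))
        - ∑ j ∈ Finset.range m,
          ((m.choose (j+1) : Int) * odf (j+1) * f (subHat (j+1) μ.dropLast))
        = ∑ j ∈ Finset.range m, ((m.choose (j+1) : Int) * odf (j+1) *
            (f (subHat (j+1) (upAt i μ.dropLast)) - f (subHat (j+1) μ.dropLast))) := by
      rw [← Finset.sum_sub_distrib]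
      exact Finset.sum_congr rfl (fun j _ => by ring)
    have hsplit : ∑ j ∈ Finset.range m, ((m.choose (j+1) : Int) * odf (j+1) *
            (f (subHat (j+1) (upAt i μ.dropLast)) - f (subHat (j+1) μ.dropLast)))
        = (∑ j ∈ Finset.range (m-1), ((m.choose (j+1) : Int) * odf (j+1) *
            (f (subHat (j+1) (upAt i μ.dropLast)) - f (subHat (j+1) μ.dropLast))))
          + (m.choose m : Int) * odf m *
            (f (subHat m (upAt i μ.dropLast)) - f (subHat m μ.dropLast)) := by
      conv_lhs => rw [show m = (m-1)+1 by omega, Finset.sum_range_succ]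
      rw [show m - 1 + 1 = m by omega]
    have hterm : ∀ j ∈ Finset.range (m-1),
        ((m-1).choose (j+1) : Int) * odf (j+1) * f (subHat (j+1+1) (upAt i μ.dropLast))
        ≤ (m.choose (j+1) : Int) * odf (j+1) *
            (f (subHat (j+1) (upAt i μ.dropLast)) - f (subHat (j+1) μ.dropLast)) := by
      intro j hj
      rw [Finset.mem_range] at hj
      have hk1 : (1:Nat) ≤ j+1 := by omega
      have hkp : j+1 < μ[i-1]'hi1r := by omega
      have hb := hbr (j+1) hk1 hkp
      have hchoose : ((m-1).choose (j+1) : Int) ≤ (m.choose (j+1) : Int) := by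
        exact_mod_cast Nat.choose_le_choose (j+1) (by omega)
      have hnn := fnn d hd0 hd1 hd f hf0 hf1 hfr _
        (isPartition_subHat hν'part (j+1+1))
      have hop := odf_pos (j+1)
      have h0 : (0:Int) ≤ ((m-1).choose (j+1) : Int) := by positivity
      have hop' : (0:Int) ≤ odf (j+1) := le_of_lt hop
      calc ((m-1).choose (j+1) : Int) * odf (j+1) * f (subHat (j+1+1) (upAt i μ.dropLast))
          ≤ (m.choose (j+1) : Int) * odf (j+1) * f (subHat (j+1+1) (upAt i μ.dropLast)) := by
            exact mul_le_mul_of_nonneg_right (mul_le_mul_of_nonneg_right hchoose hop') hnn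
        _ ≤ (m.choose (j+1) : Int) * odf (j+1) *
            (f (subHat (j+1) (upAt i μ.dropLast)) - f (subHat (j+1) μ.dropLast)) := by
            refine mul_le_mul_of_nonneg_left hb ?_
            positivity
    have hsum := Finset.sum_le_sum hterm
    have hlast : 0 ≤ (m.choose m : Int) * odf m *
        (f (subHat m (upAt i μ.dropLast)) - f (subHat m μ.dropLast)) := by
      have h0 : (0:Int) ≤ (m.choose m : Int) := by positivity
      exact mul_nonneg (mul_nonneg h0 (le_of_lt (odf_pos m))) hbr0
    linarith [ihν.1, hdiff, hsplit, hsum, hlast]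
  · -- m = 1
    have hm1e : m = 1 := by omega
    have hsubB : subHat 1 (upAt i μ) = subHat 1 (upAt i μ.dropLast) := by
      rw [hup, subHat_append, hm1e, subHat_cons, if_pos (by omega), subHat_nil,
        List.append_nil]
    rw [hsubB, hup, hfrA, hfrμ, hm1e]
    simp only [Finset.sum_range_one, Nat.zero_add, Nat.choose_self, Nat.cast_one, one_mul,
      odf_one]
    have hbr1 := hbr0
    rw [hm1e] at hbr1
    linarith [ihν.1, hbr1]

lemma main_all : ∀ n (μ : List Nat), μ.length ≤ n → IsPartition μ → 2 ≤ μ.length →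
    ∀ i, 2 ≤ i → i ≤ μ.length → μ.getD (i-1) 0 < μ.getD (i-2) 0 →
    f (subHat 1 (upAt i μ)) ≤ f (upAt i μ) - f μ ∧ 0 < f (subHat 1 (upAt i μ)) := by
  intro n
  induction n with
  | zero => intro μ h1 _ h2; omega
  | succ n ihn =>
    intro μ hlen hμ hs i hi2 his hltD
    refine ⟨?_, pos_part d hd0 hd1 hd f hf0 hf1 hfr μ hμ i hi2 his hltD⟩
    rcases eq_or_lt_of_le his with heq | hlt2
    · exact case_last d hd0 hd1 hd f hf0 hf1 hfr μ hμ hs i hi2 heq hltD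
    · exact case_lt d hd0 hd1 hd f hf0 hf1 hfr n ihn μ hlen hμ i hi2 hlt2 hltD

end Main

theorem stmt8
    (d : Nat → Int) (hd0 : d 0 = 1) (hd1 : d 1 = 0)
    (hd : ∀ n : Nat, 2 ≤ n → d n = 2 * ((n : Int) - 1) * (d (n - 1) + d (n - 2)))
    (f : List Nat → Int) (hf0 : f [] = 1) (hf1 : ∀ m : Nat, f [m] = d m)
    (hfr : ∀ l : List Nat, IsPartition l → 2 ≤ l.length →
      f l = f l.dropLast + ∑ k ∈ Finset.Icc 1 (l.getLastD 0),
        ((l.getLastD 0).choose k : Int) * odf k * f (subHat k l.dropLast))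
    (μ : List Nat) (hμ : IsPartition μ) (hs : 2 ≤ μ.length)
    (i : Nat) (hi2 : 2 ≤ i) (his : i ≤ μ.length)
    (hlt : μ.getD (i - 1) 0 < μ.getD (i - 2) 0) :
    f (subHat 1 (upAt i μ)) ≤ f (upAt i μ) - f μ ∧ 0 < f (subHat 1 (upAt i μ)) :=
  main_all d hd0 hd1 hd f hf0 hf1 hfr μ.length μ le_rfl hμ hs i hi2 his hlt
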